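/- Let (Y, d) be a metric space, let g : Y → ℝ^N be a 1-Lipschitz map into Euclidean space, and let λ, μ : Y → ℝ be finitely supported functions with nonnegative values. Suppose D ≥ 0 is such that |∑_{y} (λ(y) − μ(y)) f(y)| ≤ D for every 1-Lipschitz function f : Y → ℝ. Then ‖∑_{y} (λ(y) − μ(y)) • g(y)‖ ≤ N · D, where the norm is the Euclidean norm on ℝ^N and the sums range over the (finite) supports of λ and μ. -/

import Mathlib

open scoped BigOperators

/-- The Kantorovich–Rubinstein estimate from the proof of Proposition 3: if
`g : Y → ℝ^N` is `1`-Lipschitz and the signed measure `λ − μ` (with `λ, μ`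
finitely supported and nonnegative) pairs with every `1`-Lipschitz function
`f : Y → ℝ` to give a number of absolute value at most `D`, then
`‖∑ (λ(y) − μ(y)) • g(y)‖ ≤ N · D`. -/
theorem norm_finsum_smul_le_of_lipschitz_pairing
    {Y : Type*} [MetricSpace Y] {N : ℕ}
    (g : Y → EuclideanSpace ℝ (Fin N)) (hg : LipschitzWith 1 g)
    (lam mu : Y → ℝ)
    (hlam : (Function.support lam).Finite) (hmu : (Function.support mu).Finite)
    (hlam0 : ∀ y, 0 ≤ lam y) (hmu0 : ∀ y, 0 ≤ mu y)
    (D : ℝ) (hD : 0 ≤ D)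
    (hpair : ∀ f : Y → ℝ, LipschitzWith 1 f → |∑ᶠ y, (lam y - mu y) * f y| ≤ D) :
    ‖∑ᶠ y, (lam y - mu y) • g y‖ ≤ (N : ℝ) * D := by
  classical
  set s : Finset Y := (hlam.union hmu).toFinset with hs
  have hsub : Function.support (fun y => (lam y - mu y)) ⊆ ↑s := by
    intro y hy
    simp only [Function.mem_support] at hy
    simp only [hs, Set.Finite.coe_toFinset, Set.mem_union, Function.mem_support]
    by_contra h
    push_neg at h
    rw [h.1, h.2] at hy
    simp at hy
  have hsub' : ∀ (h : Y → ℝ), Function.support (fun y => (lam y - mu y) * h y) ⊆ ↑s := by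
    intro h y hy
    apply hsub
    intro hzero
    apply hy
    simp [hzero]
  have hsubg : Function.support (fun y => (lam y - mu y) • g y) ⊆ ↑s := by
    intro y hy
    apply hsub
    intro hzero
    apply hy
    simp [hzero]
  have hv : (∑ᶠ y, (lam y - mu y) • g y) = ∑ y ∈ s, (lam y - mu y) • g y :=
    finsum_eq_finset_sum_of_support_subset _ hsubg
  set v : EuclideanSpace ℝ (Fin N) := ∑ y ∈ s, (lam y - mu y) • g y with hvdef
  rw [hv]
  -- coordinate bound
  have hcoord : ∀ k : Fin N, |v k| ≤ D := by
    intro k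
    have hf : LipschitzWith 1 (fun y => g y k) := by
      intro x y
      refine le_trans ?_ (hg x y)
      have : dist (g x k) (g y k) ≤ dist (g x) (g y) := by
        have := EuclideanSpace.dist_eq (g x) (g y)
        rw [this]
        have h1 : dist (g x k) (g y k) ^ 2 ≤ ∑ i, dist (g x i) (g y i) ^ 2 :=
          Finset.single_le_sum (f := fun i => dist (g x i) (g y i) ^ 2)
            (fun i _ => sq_nonneg _) (Finset.mem_univ k)
        calc dist (g x k) (g y k) = Real.sqrt (dist (g x k) (g y k) ^ 2) := by
              rw [Real.sqrt_sq dist_nonneg]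
          _ ≤ _ := Real.sqrt_le_sqrt h1
      simpa [edist_dist] using ENNReal.ofReal_le_ofReal this
    have := hpair (fun y => g y k) hf
    have heq : (∑ᶠ y, (lam y - mu y) * g y k) = v k := by
      rw [finsum_eq_finset_sum_of_support_subset _ (hsub' (fun y => g y k))]
      rw [hvdef]
      rw [show (∑ y ∈ s, (lam y - mu y) • g y) k = ∑ y ∈ s, ((lam y - mu y) • g y) k from
        by rw [WithLp.ofLp_sum]; exact Finset.sum_apply k s _]
      simp [smul_eq_mul]
    rwa [heq] at this
  -- norm ≤ sum of abs of coordinates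
  have hnorm : ‖v‖ ≤ ∑ k : Fin N, |v k| := by
    rw [EuclideanSpace.norm_eq]
    have h1 : ∑ k : Fin N, ‖v k‖ ^ 2 ≤ (∑ k : Fin N, |v k|) ^ 2 := by
      simp only [Real.norm_eq_abs]
      exact Finset.sum_sq_le_sq_sum_of_nonneg (fun i _ => abs_nonneg _)
    calc Real.sqrt (∑ k : Fin N, ‖v k‖ ^ 2) ≤ Real.sqrt ((∑ k : Fin N, |v k|) ^ 2) :=
          Real.sqrt_le_sqrt h1
      _ = ∑ k : Fin N, |v k| :=
          Real.sqrt_sq (Finset.sum_nonneg fun i _ => abs_nonneg _)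
  calc ‖v‖ ≤ ∑ k : Fin N, |v k| := hnorm
    _ ≤ ∑ _k : Fin N, D := Finset.sum_le_sum fun k _ => hcoord k
    _ = (N : ℝ) * D := by simp [mul_comm]
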